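/- Let p ≥ 7 be a prime. Then the prime order element graph Γ(ℤ_p) contains K₅ as a minor; in particular, Γ(ℤ_p) is not planar. -/

import Mathlib

/-- The prime order element graph of a group `G`: distinct `x, y` are adjacent
iff `orderOf (x * y)` is prime. -/
def primeOrderGraph (G : Type*) [Group G] : SimpleGraph G where
  Adj x y := x ≠ y ∧ (orderOf (x * y)).Prime
  symm := by
    constructor
    rintro x y ⟨hne, hp⟩
    refine ⟨hne.symm, ?_⟩
    have h : SemiconjBy x (y * x) (x * y) := by
      unfold SemiconjBy; group
    rwa [SemiconjBy.orderOf_eq x h]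
  loopless := by constructor; rintro x ⟨hne, -⟩; exact hne rfl

/-- `H` is a minor of `G`: there are nonempty, connected, pairwise disjoint
branch sets in `G`, one for each vertex of `H`, with edges between branch sets
of adjacent vertices of `H`. -/
def SimpleGraph.HasMinor {V W : Type*} (G : SimpleGraph V) (H : SimpleGraph W) : Prop :=
  ∃ B : W → Set V,
    (∀ w, (B w).Nonempty) ∧
    (∀ w, (G.induce (B w)).Connected) ∧
    (Pairwise fun w₁ w₂ => Disjoint (B w₁) (B w₂)) ∧
    (∀ w₁ w₂, H.Adj w₁ w₂ → ∃ v₁ ∈ B w₁, ∃ v₂ ∈ B w₂, G.Adj v₁ v₂)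

/-- Planarity à la Wagner: no `K₅` minor and no `K₃,₃` minor. -/
def SimpleGraph.IsPlanar {V : Type*} (G : SimpleGraph V) : Prop :=
  ¬ G.HasMinor (⊤ : SimpleGraph (Fin 5)) ∧
  ¬ G.HasMinor (completeBipartiteGraph (Fin 3) (Fin 3))

section aux

variable {p : ℕ}

lemma aux_ne (hp7 : 7 ≤ p) {m n : ℕ} (hm : m < 7) (hn : n < 7) (hmn : m ≠ n) :
    (Multiplicative.ofAdd ((m : ZMod p)) : Multiplicative (ZMod p)) ≠ Multiplicative.ofAdd ((n : ZMod p)) := by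
  intro h
  apply hmn
  have h2 : (m : ZMod p) = n := Multiplicative.ofAdd.injective h
  have := congrArg ZMod.val h2
  rwa [ZMod.val_cast_of_lt (lt_of_lt_of_le hm hp7),
    ZMod.val_cast_of_lt (lt_of_lt_of_le hn hp7)] at this

lemma aux_adj (hp : p.Prime) (hp7 : 7 ≤ p) {m n : ℕ} (hm : m < 7) (hn : n < 7)
    (hmn : m ≠ n) (hd : ¬ p ∣ (m + n)) :
    (primeOrderGraph (Multiplicative (ZMod p))).Adj
      (Multiplicative.ofAdd ((m : ZMod p))) (Multiplicative.ofAdd ((n : ZMod p))) := by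
  haveI : NeZero p := ⟨hp.pos.ne'⟩
  refine ⟨aux_ne hp7 hm hn hmn, ?_⟩
  have hmul : (Multiplicative.ofAdd ((m : ZMod p)) : Multiplicative (ZMod p)) *
      Multiplicative.ofAdd ((n : ZMod p)) = Multiplicative.ofAdd (((m + n : ℕ) : ZMod p)) := by
    rw [← ofAdd_add]; push_cast; ring_nf
  rw [hmul]
  have hne1 : (Multiplicative.ofAdd (((m + n : ℕ) : ZMod p)) : Multiplicative (ZMod p)) ≠ 1 := by
    simp only [ne_eq, ofAdd_eq_one]
    rw [ZMod.natCast_eq_zero_iff]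
    exact hd
  have hdvd : orderOf (Multiplicative.ofAdd (((m + n : ℕ) : ZMod p)) : Multiplicative (ZMod p)) ∣ p := by
    have := orderOf_dvd_card (G := Multiplicative (ZMod p))
      (x := Multiplicative.ofAdd (((m + n : ℕ) : ZMod p)))
    rwa [Fintype.card_multiplicative, ZMod.card] at this
  rcases (Nat.dvd_prime hp).mp hdvd with h1 | h1
  · exact absurd (orderOf_eq_one_iff.mp h1) hne1
  · rw [h1]; exact hp

end aux
section aux2
variable {p : ℕ}

lemma aux_ndvd (hp : p.Prime) (hp7 : 7 ≤ p) {s : ℕ} (h1 : 0 < s) (h2 : s ≤ 9)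
    (h3 : s ≠ 7) : ¬ p ∣ s := by
  intro h
  have hle := Nat.le_of_dvd h1 h
  have : p ≤ 9 := le_trans hle h2
  interval_cases p
  · omega
  · exact absurd hp (by norm_num)
  · exact absurd hp (by norm_num)

lemma conn_single {V : Type*} (G : SimpleGraph V) (a : V) :
    (G.induce ({a} : Set V)).Connected := by
  haveI : Nonempty ({a} : Set V) := ⟨⟨a, rfl⟩⟩
  refine SimpleGraph.Connected.mk fun x y => ?_
  obtain ⟨x, hx⟩ := x; obtain ⟨y, hy⟩ := y
  simp only [Set.mem_singleton_iff] at hx hy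
  subst hx; subst hy; rfl

lemma conn_pair {V : Type*} (G : SimpleGraph V) (a b : V) (h : G.Adj a b) :
    (G.induce ({a, b} : Set V)).Connected := by
  have ha : a ∈ ({a, b} : Set V) := Set.mem_insert a _
  have hb : b ∈ ({a, b} : Set V) := Set.mem_insert_iff.mpr (Or.inr rfl)
  have hadj : (G.induce ({a, b} : Set V)).Adj ⟨a, ha⟩ ⟨b, hb⟩ := h
  haveI : Nonempty ({a, b} : Set V) := ⟨⟨a, ha⟩⟩
  refine SimpleGraph.Connected.mk fun x y => ?_
  obtain ⟨x, hx⟩ := x; obtain ⟨y, hy⟩ := y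
  have reach : ∀ z (hz : z ∈ ({a, b} : Set V)),
      (G.induce ({a, b} : Set V)).Reachable ⟨a, ha⟩ ⟨z, hz⟩ := by
    intro z hz
    rcases hz with rfl | hz
    · rfl
    · rcases hz with rfl
      exact hadj.reachable
  exact (reach x hx).symm.trans (reach y hy)

end aux2

theorem stmt_9 (p : ℕ) (hp : p.Prime) (hp7 : 7 ≤ p) :
    (primeOrderGraph (Multiplicative (ZMod p))).HasMinor
        (⊤ : SimpleGraph (Fin 5)) ∧
    ¬ (primeOrderGraph (Multiplicative (ZMod p))).IsPlanar := by
  have hadj : ∀ m n : ℕ, m < 7 → n < 7 → m ≠ n → m + n ≤ 9 → m + n ≠ 7 → m + n ≠ 0 →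
      (primeOrderGraph (Multiplicative (ZMod p))).Adj
        (Multiplicative.ofAdd ((m : ZMod p))) (Multiplicative.ofAdd ((n : ZMod p))) := by
    intro m n hm hn hmn h9 h7 h0
    exact aux_adj hp hp7 hm hn hmn (aux_ndvd hp hp7 (by omega) h9 h7)
  have hfne : ∀ m n : ℕ, m < 7 → n < 7 → m ≠ n →
      (Multiplicative.ofAdd ((m : ZMod p)) : Multiplicative (ZMod p)) ≠
        Multiplicative.ofAdd ((n : ZMod p)) := fun m n hm hn hmn => aux_ne hp7 hm hn hmn
  set f : ℕ → Multiplicative (ZMod p) := fun n => Multiplicative.ofAdd ((n : ZMod p)) with hf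
  have hminor : (primeOrderGraph (Multiplicative (ZMod p))).HasMinor
      (⊤ : SimpleGraph (Fin 5)) := by
    refine ⟨fun w => match w with
      | 0 => {f 0} | 1 => {f 1} | 2 => {f 2} | 3 => {f 3} | 4 => {f 4, f 5},
      ?_, ?_, ?_, ?_⟩
    · intro w
      fin_cases w
      · exact ⟨f 0, rfl⟩
      · exact ⟨f 1, rfl⟩
      · exact ⟨f 2, rfl⟩
      · exact ⟨f 3, rfl⟩
      · exact ⟨f 4, Or.inl rfl⟩
    · intro w
      fin_cases w
      · exact conn_single _ (f 0)
      · exact conn_single _ (f 1)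
      · exact conn_single _ (f 2)
      · exact conn_single _ (f 3)
      · exact conn_pair _ (f 4) (f 5)
          (hadj 4 5 (by omega) (by omega) (by omega) (by omega) (by omega) (by omega))
    · intro w₁ w₂ hne
      have key : ∀ m n : ℕ, m < 7 → n < 7 → m ≠ n →
          Disjoint ({f m} : Set (Multiplicative (ZMod p))) {f n} := by
        intro m n hm hn hmn
        exact Set.disjoint_singleton.mpr (hfne m n hm hn hmn)
      have key2 : ∀ m : ℕ, m < 4 →
          Disjoint ({f m} : Set (Multiplicative (ZMod p))) {f 4, f 5} := by
        intro m hm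
        simp only [Set.disjoint_singleton_left, Set.mem_insert_iff, Set.mem_singleton_iff]
        push_neg
        exact ⟨hfne m 4 (by omega) (by omega) (by omega),
          hfne m 5 (by omega) (by omega) (by omega)⟩
      fin_cases w₁ <;> fin_cases w₂ <;>
        first
          | exact absurd rfl hne
          | exact key _ _ (by omega) (by omega) (by omega)
          | exact key2 _ (by omega)
          | exact (key2 _ (by omega)).symm
    · intro w₁ w₂ hne
      have h01 := hadj 0 1 (by omega) (by omega) (by omega) (by omega) (by omega) (by omega)
      have h02 := hadj 0 2 (by omega) (by omega) (by omega) (by omega) (by omega) (by omega)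
      have h03 := hadj 0 3 (by omega) (by omega) (by omega) (by omega) (by omega) (by omega)
      have h12 := hadj 1 2 (by omega) (by omega) (by omega) (by omega) (by omega) (by omega)
      have h13 := hadj 1 3 (by omega) (by omega) (by omega) (by omega) (by omega) (by omega)
      have h23 := hadj 2 3 (by omega) (by omega) (by omega) (by omega) (by omega) (by omega)
      have h04 := hadj 0 4 (by omega) (by omega) (by omega) (by omega) (by omega) (by omega)
      have h14 := hadj 1 4 (by omega) (by omega) (by omega) (by omega) (by omega) (by omega)
      have h24 := hadj 2 4 (by omega) (by omega) (by omega) (by omega) (by omega) (by omega)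
      have h35 := hadj 3 5 (by omega) (by omega) (by omega) (by omega) (by omega) (by omega)
      fin_cases w₁ <;> fin_cases w₂ <;>
        first
          | exact absurd rfl hne
          | exact ⟨f 0, rfl, f 1, rfl, h01⟩
          | exact ⟨f 0, rfl, f 2, rfl, h02⟩
          | exact ⟨f 0, rfl, f 3, rfl, h03⟩
          | exact ⟨f 1, rfl, f 2, rfl, h12⟩
          | exact ⟨f 1, rfl, f 3, rfl, h13⟩
          | exact ⟨f 2, rfl, f 3, rfl, h23⟩
          | exact ⟨f 1, rfl, f 0, rfl, h01.symm⟩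
          | exact ⟨f 2, rfl, f 0, rfl, h02.symm⟩
          | exact ⟨f 3, rfl, f 0, rfl, h03.symm⟩
          | exact ⟨f 2, rfl, f 1, rfl, h12.symm⟩
          | exact ⟨f 3, rfl, f 1, rfl, h13.symm⟩
          | exact ⟨f 3, rfl, f 2, rfl, h23.symm⟩
          | exact ⟨f 0, rfl, f 4, Or.inl rfl, h04⟩
          | exact ⟨f 1, rfl, f 4, Or.inl rfl, h14⟩
          | exact ⟨f 2, rfl, f 4, Or.inl rfl, h24⟩
          | exact ⟨f 3, rfl, f 5, Or.inr rfl, h35⟩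
          | exact ⟨f 4, Or.inl rfl, f 0, rfl, h04.symm⟩
          | exact ⟨f 4, Or.inl rfl, f 1, rfl, h14.symm⟩
          | exact ⟨f 4, Or.inl rfl, f 2, rfl, h24.symm⟩
          | exact ⟨f 5, Or.inr rfl, f 3, rfl, h35.symm⟩
  exact ⟨hminor, fun h => h.1 hminor⟩
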